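/- Let S be a simple Cu-semigroup with largest element ∞ satisfying β-comparison. If there exists a nonzero x ∈ S with β(x, y) = 0, then y = ∞. Conversely, if this implication holds for all y, then S has β-comparison. -/

import Mathlib

open scoped ENNReal

/-- Compact containment (way-below) relation: `a ≪ b` iff for every monotone sequence
with a supremum dominating `b`, some term dominates `a`. -/
def CuWayBelow {S : Type*} [Preorder S] (a b : S) : Prop :=
  ∀ c : ℕ → S, Monotone c → ∀ s : S, IsLUB (Set.range c) s → b ≤ s → ∃ n, a ≤ c n

/-- The axioms (O1)-(O4) of the category Cu, together with positivity of the order. -/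
structure CuSemigroup (S : Type*) [AddCommMonoid S] [PartialOrder S] [IsOrderedAddMonoid S] : Prop where
  pos : ∀ x : S, 0 ≤ x
  O1 : ∀ c : ℕ → S, Monotone c → ∃ s : S, IsLUB (Set.range c) s
  O2 : ∀ a : S, ∃ c : ℕ → S, (∀ n, CuWayBelow (c n) (c (n + 1))) ∧ IsLUB (Set.range c) a
  O3 : ∀ a' a b' b : S, CuWayBelow a' a → CuWayBelow b' b → CuWayBelow (a' + b') (a + b)
  O4 : ∀ c d : ℕ → S, Monotone c → Monotone d → ∀ s t : S,
      IsLUB (Set.range c) s → IsLUB (Set.range d) t →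
      IsLUB (Set.range fun n => c n + d n) (s + t)

/-- Simplicity: every nonzero element is full. -/
def CuSimple (S : Type*) [AddCommMonoid S] [PartialOrder S] [IsOrderedAddMonoid S] : Prop :=
  ∀ x y : S, x ≠ 0 → y ≠ 0 → ∀ y' : S, CuWayBelow y' y → ∃ n : ℕ, y' ≤ n • x

/-- A full sequence: increasing and absorbing every compactly contained element. -/
def CuFullSeq {S : Type*} [AddCommMonoid S] [PartialOrder S] [IsOrderedAddMonoid S] (x : ℕ → S) : Prop :=
  Monotone x ∧ ∀ z' z : S, CuWayBelow z' z → ∃ n m : ℕ, z' ≤ m • x n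

/-- The value `β(x,y) = inf { l/k : k ≥ 1, k•x ≤ l•y }`. -/
noncomputable def beta {W : Type*} [AddCommMonoid W] [PartialOrder W] [IsOrderedAddMonoid W] (x y : W) : ℝ :=
  sInf {r : ℝ | ∃ k l : ℕ, 0 < k ∧ k • x ≤ l • y ∧ r = (l : ℝ) / (k : ℝ)}

/-- ω-comparison. -/
def OmegaComparison (S : Type*) [AddCommMonoid S] [PartialOrder S] [IsOrderedAddMonoid S] : Prop :=
  ∀ (x' x : S) (y : ℕ → S), CuWayBelow x' x →
    (∀ j : ℕ, ∃ k : ℕ, 1 ≤ k ∧ (k + 1) • x ≤ k • y j) →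
    ∃ n : ℕ, x' ≤ ∑ j ∈ Finset.range n, y j

/-- β-comparison. -/
def BetaComparison (S : Type*) [AddCommMonoid S] [PartialOrder S] [IsOrderedAddMonoid S] : Prop :=
  ∀ x y : S, (∃ n : ℕ, x ≤ n • y) → beta x y = 0 → x ≤ y

lemma cuWayBelow_le {S : Type*} [Preorder S] {a b : S} (h : CuWayBelow a b) : a ≤ b := by
  obtain ⟨n, hn⟩ := h (fun _ => b) monotone_const b
    (by simpa [Set.range_const] using isLUB_singleton (a := b)) le_rfl
  exact hn

/-- elements of the beta set are nonneg -/
lemma beta_set_nonneg {W : Type*} [AddCommMonoid W] [PartialOrder W] [IsOrderedAddMonoid W] (x y : W) :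
    ∀ r ∈ {r : ℝ | ∃ k l : ℕ, 0 < k ∧ k • x ≤ l • y ∧ r = (l : ℝ) / (k : ℝ)}, 0 ≤ r := by
  rintro r ⟨k, l, hk, _, rfl⟩
  positivity

lemma beta_small {W : Type*} [AddCommMonoid W] [PartialOrder W] [IsOrderedAddMonoid W] {x y : W} (hne : ∃ n : ℕ, x ≤ n • y)
    (h : beta x y = 0) {ε : ℝ} (hε : 0 < ε) :
    ∃ k l : ℕ, 0 < k ∧ k • x ≤ l • y ∧ (l : ℝ) / (k : ℝ) < ε := by
  obtain ⟨n, hn⟩ := hne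
  have hnonempty : {r : ℝ | ∃ k l : ℕ, 0 < k ∧ k • x ≤ l • y ∧ r = (l : ℝ) / (k : ℝ)}.Nonempty :=
    ⟨(n : ℝ) / 1, 1, n, one_pos, by simpa using hn, by norm_num⟩
  have hbdd : BddBelow {r : ℝ | ∃ k l : ℕ, 0 < k ∧ k • x ≤ l • y ∧ r = (l : ℝ) / (k : ℝ)} :=
    ⟨0, fun r hr => beta_set_nonneg x y r hr⟩
  have hlt : sInf {r : ℝ | ∃ k l : ℕ, 0 < k ∧ k • x ≤ l • y ∧ r = (l : ℝ) / (k : ℝ)} < ε := by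
    rw [show sInf {r : ℝ | ∃ k l : ℕ, 0 < k ∧ k • x ≤ l • y ∧ r = (l : ℝ) / (k : ℝ)} = beta x y
      from rfl, h]; exact hε
  obtain ⟨r, hr, hrε⟩ := (csInf_lt_iff hbdd hnonempty).1 hlt
  obtain ⟨k, l, hk, hkl, rfl⟩ := hr
  exact ⟨k, l, hk, hkl, hrε⟩

lemma beta_smul_zero {W : Type*} [AddCommMonoid W] [PartialOrder W] [IsOrderedAddMonoid W] {x y : W} (hne : ∃ n : ℕ, x ≤ n • y)
    (h : beta x y = 0) (m : ℕ) (hm : 0 < m) : beta (m • x) y = 0 := by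
  set A : Set ℝ := {r : ℝ | ∃ k l : ℕ, 0 < k ∧ k • (m • x) ≤ l • y ∧ r = (l : ℝ) / (k : ℝ)}
  have hlow : 0 ≤ sInf A := Real.sInf_nonneg (beta_set_nonneg (m • x) y)
  have hup : sInf A ≤ 0 := by
    by_contra hpos
    push_neg at hpos
    obtain ⟨k, l, hk, hkl, hsmall⟩ := beta_small hne h (div_pos hpos (by exact_mod_cast hm) :
      (0 : ℝ) < sInf A / m)
    have hmem : ((m * l : ℕ) : ℝ) / (k : ℝ) ∈ A := by
      refine ⟨k, m * l, hk, ?_, rfl⟩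
      calc k • (m • x) = m • (k • x) := by rw [smul_comm]
        _ ≤ m • (l • y) := nsmul_le_nsmul_right hkl m
        _ = (m * l) • y := (mul_smul m l y).symm
    have := csInf_le ⟨0, fun r hr => beta_set_nonneg (m • x) y r hr⟩ hmem
    have hcalc : ((m * l : ℕ) : ℝ) / (k : ℝ) < sInf A := by
      push_cast
      rw [div_lt_div_iff₀ (by exact_mod_cast hk) (by exact_mod_cast hm)] at hsmall
      rw [div_lt_iff₀ (by exact_mod_cast hk : (0:ℝ) < (k:ℝ))]
      nlinarith [hsmall]
    linarith
  exact le_antisymm hup hlow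

/-- In a simple Cu-semigroup with largest element `∞`, β-comparison holds iff
`β(x,y) = 0` for some nonzero `x` (with `x ∝ y`) forces `y = ∞`. -/
theorem stmt13 {S : Type*} [AddCommMonoid S] [PartialOrder S] [IsOrderedAddMonoid S] (hCu : CuSemigroup S)
    (hsimple : CuSimple S) (infty : S) (htop : ∀ s : S, s ≤ infty) :
    BetaComparison S ↔
      (∀ y : S, (∃ x : S, x ≠ 0 ∧ (∃ n : ℕ, x ≤ n • y) ∧ beta x y = 0) → y = infty) := by
  constructor
  · intro hβ y ⟨x, hx0, hprop, hb⟩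
    obtain ⟨n, hxn⟩ := hprop
    -- every multiple of x is below y
    have hmy : ∀ m : ℕ, m • x ≤ y := by
      intro m
      rcases Nat.eq_zero_or_pos m with rfl | hm
      · simpa using hCu.pos y
      · refine hβ (m • x) y ⟨m * n, ?_⟩ (beta_smul_zero ⟨n, hxn⟩ hb m hm)
        calc m • x ≤ m • (n • y) := nsmul_le_nsmul_right hxn m
          _ = (m * n) • y := (mul_smul m n y).symm
    obtain ⟨c, hc, hlub⟩ := hCu.O2 infty
    have hcy : ∀ j, c j ≤ y := by
      intro j
      by_cases h0 : c (j + 1) = 0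
      · have := cuWayBelow_le (hc j)
        rw [h0] at this
        exact this.trans (hCu.pos y)
      · obtain ⟨m, hmle⟩ := hsimple x (c (j + 1)) hx0 h0 (c j) (hc j)
        exact hmle.trans (hmy m)
    have : infty ≤ y := hlub.2 (by rintro z ⟨j, rfl⟩; exact hcy j)
    exact le_antisymm (htop y) this
  · intro h x y hprop hb
    by_cases hx : x = 0
    · rw [hx]; exact hCu.pos y
    · rw [h y ⟨x, hx, hprop, hb⟩]; exact htop x
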